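/- Let n ≥ 2 and set t = n/(n−1). There is a constant C = C(n) such that the following holds. Let u : ℝⁿ → ℝ be continuously differentiable, let B = B(x₀, r) be a Euclidean ball, let 0 < γ < 1, and suppose the set A = {x ∈ B : u(x) ≠ 0} satisfies Lⁿ(A) ≤ γ Lⁿ(B). Then ( ⨍_B |u|^t dLⁿ )^{1/t} ≤ (C / (1 − γ^{1−1/t})) · r · ⨍_{2B} ‖∇u‖ dLⁿ, where ⨍ denotes the average integral and 2B = B(x₀, 2r). -/

import Mathlib

open MeasureTheory Metric Real Set
open scoped ENNReal NNReal

noncomputable section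
namespace SobolevSmall

abbrev Eu (n : ℕ) := EuclideanSpace ℝ (Fin n)

variable {n : ℕ}

lemma ofReal_norm_eq_coe_nnnorm {E : Type*} [SeminormedAddGroup E] (a : E) :
    ENNReal.ofReal ‖a‖ = (‖a‖₊ : ℝ≥0∞) := ofReal_norm a

lemma eLpNorm_eq_lintegral_rpow_nnnorm {α E : Type*} [MeasurableSpace α] {μ : Measure α}
    [NormedAddCommGroup E] {p : ℝ≥0∞} (hp0 : p ≠ 0) (hp : p ≠ ∞) {f : α → E} :
    eLpNorm f p μ = (∫⁻ x, (‖f x‖₊ : ℝ≥0∞) ^ p.toReal ∂μ) ^ (1 / p.toReal) :=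
  eLpNorm_eq_lintegral_rpow_enorm_toReal hp0 hp

lemma eLpNorm_one_eq_lintegral_nnnorm {α E : Type*} [MeasurableSpace α] {μ : Measure α}
    [NormedAddCommGroup E] {f : α → E} :
    eLpNorm f 1 μ = ∫⁻ x, (‖f x‖₊ : ℝ≥0∞) ∂μ :=
  eLpNorm_one_eq_lintegral_enorm

lemma map_affine (b : Eu n) {s : ℝ} (hs : 0 < s) :
    Measure.map (fun x : Eu n => s • x + b) volume
      = (ENNReal.ofReal (s ^ n)⁻¹) • volume := by
  have hT : Measurable (fun x : Eu n => s • x + b) := by fun_prop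
  ext A hA
  rw [Measure.map_apply hT hA, Measure.smul_apply, smul_eq_mul]
  have : (fun x : Eu n => s • x + b) ⁻¹' A
      = (fun x : Eu n => s • x) ⁻¹' ((fun y : Eu n => y + b) ⁻¹' A) := rfl
  rw [this, Measure.addHaar_preimage_smul volume hs.ne' _, finrank_euclideanSpace_fin,
    measure_preimage_add_right]
  rw [abs_of_nonneg (by positivity)]

lemma preimage_affine_ball (b c : Eu n) {s : ℝ} (hs : 0 < s) (R : ℝ) :
    (fun x : Eu n => s • x + b) ⁻¹' ball (s • c + b) (s * R) = ball c R := by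
  ext x
  simp only [mem_preimage, mem_ball, dist_eq_norm]
  have : s • x + b - (s • c + b) = s • (x - c) := by module
  rw [this, norm_smul, Real.norm_eq_abs, abs_of_nonneg hs.le]
  exact mul_lt_mul_iff_right₀ hs

lemma cv_smul (g : Eu n → ℝ≥0∞) (hg : Measurable g) {s : ℝ} (hs : 0 < s)
    (b c : Eu n) (R : ℝ) :
    ∫⁻ x in ball c R, g (s • x + b) =
      ENNReal.ofReal (s ^ n)⁻¹ * ∫⁻ y in ball (s • c + b) (s * R), g y := by
  have hT : Measurable (fun x : Eu n => s • x + b) := by fun_prop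
  have h1 : (Measure.map (fun x : Eu n => s • x + b) volume).restrict
        (ball (s • c + b) (s * R))
      = Measure.map (fun x : Eu n => s • x + b) (volume.restrict (ball c R)) := by
    rw [Measure.restrict_map hT measurableSet_ball, preimage_affine_ball b c hs R]
  calc ∫⁻ x in ball c R, g (s • x + b)
      = ∫⁻ y, g y ∂(Measure.map (fun x : Eu n => s • x + b) (volume.restrict (ball c R))) :=
        (lintegral_map hg hT).symm
    _ = ∫⁻ y, g y ∂((Measure.map (fun x : Eu n => s • x + b) volume).restrict
          (ball (s • c + b) (s * R))) := by rw [h1]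
    _ = ENNReal.ofReal (s ^ n)⁻¹ * ∫⁻ y in ball (s • c + b) (s * R), g y := by
        rw [map_affine b hs, Measure.restrict_smul, lintegral_smul_measure, smul_eq_mul]

lemma cv_smul_le (g : Eu n → ℝ≥0∞) (hg : Measurable g) {s : ℝ} (hs : 1/2 ≤ s) (hs1 : s ≤ 1)
    (b c c' : Eu n) {R R' : ℝ}
    (hsub : ball (s • c + b) (s * R) ⊆ ball c' R') :
    ∫⁻ x in ball c R, g (s • x + b) ≤ 2 ^ n * ∫⁻ y in ball c' R', g y := by
  have hs0 : 0 < s := lt_of_lt_of_le (by norm_num) hs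
  rw [cv_smul g hg hs0 b c R]
  have h2 : ENNReal.ofReal (s ^ n)⁻¹ ≤ 2 ^ n := by
    have h3 : (s ^ n)⁻¹ ≤ 2 ^ n := by
      have h4 : (2:ℝ)⁻¹ ^ n ≤ s ^ n := pow_le_pow_left₀ (by norm_num) (by linarith) n
      have h5 : (s ^ n)⁻¹ ≤ ((2:ℝ)⁻¹ ^ n)⁻¹ := by
        apply inv_anti₀ (by positivity) h4
      simpa using h5
    calc ENNReal.ofReal (s ^ n)⁻¹ ≤ ENNReal.ofReal (2 ^ n) := ENNReal.ofReal_le_ofReal h3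
      _ = 2 ^ n := by rw [ENNReal.ofReal_pow (by norm_num)]; norm_num
  exact mul_le_mul' h2 (lintegral_mono_set hsub)



lemma seg_bound {v : Eu n → ℝ} (hv : ContDiff ℝ 1 v) (a b : Eu n) :
    |v b - v a| ≤ ∫ σ in Ioc (0:ℝ) 1, ‖b - a‖ * ‖fderiv ℝ v (a + σ • (b - a))‖ := by
  set γ : ℝ → Eu n := fun σ => a + σ • (b - a) with hγdef
  have hγc : Continuous γ := by fun_prop
  have hγ : ∀ σ : ℝ, HasDerivAt γ (b - a) σ := by
    intro σ
    simpa [hγdef] using ((hasDerivAt_id σ).smul_const (b - a)).const_add a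
  have hd : ∀ σ : ℝ, HasDerivAt (fun τ => v (γ τ)) ((fderiv ℝ v (γ σ)) (b - a)) σ := by
    intro σ
    exact ((hv.differentiable one_ne_zero (γ σ)).hasFDerivAt.comp_hasDerivAt σ (hγ σ))
  have hcont : Continuous fun σ : ℝ => (fderiv ℝ v (γ σ)) (b - a) :=
    ((hv.continuous_fderiv one_ne_zero).comp hγc).clm_apply continuous_const
  have hftc : ∫ σ in (0:ℝ)..1, (fderiv ℝ v (γ σ)) (b - a) = v (γ 1) - v (γ 0) :=
    intervalIntegral.integral_eq_sub_of_hasDerivAt (fun σ _ => hd σ)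
      (hcont.intervalIntegrable 0 1)
  have hγ1 : γ 1 = b := by simp [hγdef]
  have hγ0 : γ 0 = a := by simp [hγdef]
  conv_lhs => rw [← hγ1, ← hγ0]
  rw [← hftc, intervalIntegral.integral_of_le zero_le_one]
  try simp only [hγ1, hγ0]
  calc |∫ σ in Ioc (0:ℝ) 1, (fderiv ℝ v (γ σ)) (b - a)|
      ≤ ∫ σ in Ioc (0:ℝ) 1, |(fderiv ℝ v (γ σ)) (b - a)| := by
        simpa using
          norm_integral_le_integral_norm (fun σ => (fderiv ℝ v (γ σ)) (b - a)) (μ := volume.restrict (Ioc 0 1))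
    _ ≤ ∫ σ in Ioc (0:ℝ) 1, ‖b - a‖ * ‖fderiv ℝ v (γ σ)‖ := by
        apply integral_mono_of_nonneg
        · filter_upwards with σ using abs_nonneg _
        · exact (continuous_const.mul
            ((hv.continuous_fderiv one_ne_zero).comp hγc).norm).integrableOn_Ioc
        · filter_upwards with σ
          calc |(fderiv ℝ v (γ σ)) (b - a)| ≤ ‖fderiv ℝ v (γ σ)‖ * ‖b - a‖ :=
            (fderiv ℝ v (γ σ)).le_opNorm (b - a)
          _ = ‖b - a‖ * ‖fderiv ℝ v (γ σ)‖ := mul_comm _ _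

end SobolevSmall

namespace SobolevSmall
variable {n : ℕ}

/-- Annulus estimate: `∫_{2B} |v| ≤ 2^n ∫_B |v| + 2^n r ∫_{2B} ‖∇v‖`. -/
lemma annulus {v : Eu n → ℝ} (hv : ContDiff ℝ 1 v) (x₀ : Eu n) {r : ℝ} (hr : 0 < r) :
    ∫⁻ x in ball x₀ (2*r), ENNReal.ofReal |v x| ≤
      2 ^ n * (∫⁻ x in ball x₀ r, ENNReal.ofReal |v x|)
      + ENNReal.ofReal r * (2 ^ n * ∫⁻ x in ball x₀ (2*r), (‖fderiv ℝ v x‖₊ : ℝ≥0∞)) := by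
  have hvc : Continuous v := hv.continuous
  have hgc : Continuous (fderiv ℝ v) := hv.continuous_fderiv one_ne_zero
  set B2 := ball x₀ (2*r)
  -- the contracted point
  set T : Eu n → Eu n := fun x => (2⁻¹ : ℝ) • x + (2⁻¹ : ℝ) • x₀ with hT
  -- pointwise split
  have hsplit : ∀ x : Eu n, ENNReal.ofReal |v x| ≤
      ENNReal.ofReal |v (T x)| + ENNReal.ofReal |v x - v (T x)| := by
    intro x
    rw [← ENNReal.ofReal_add (abs_nonneg _) (abs_nonneg _)]
    apply ENNReal.ofReal_le_ofReal
    calc |v x| = |v (T x) + (v x - v (T x))| := by ring_nf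
      _ ≤ |v (T x)| + |v x - v (T x)| := abs_add_le _ _
  have hA1 : ∫⁻ x in B2, ENNReal.ofReal |v (T x)| ≤
      2 ^ n * ∫⁻ x in ball x₀ r, ENNReal.ofReal |v x| := by
    have hsub : ball ((2⁻¹:ℝ) • x₀ + (2⁻¹:ℝ) • x₀) (2⁻¹ * (2*r)) ⊆ ball x₀ r := by
      have h1 : (2⁻¹:ℝ) • x₀ + (2⁻¹:ℝ) • x₀ = x₀ := by module
      rw [h1]
      have : (2⁻¹ : ℝ) * (2*r) = r := by ring
      rw [this]
    exact cv_smul_le _ (ENNReal.measurable_ofReal.comp (hvc.abs.measurable)) (by norm_num)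
      (by norm_num) _ _ _ hsub
  -- second piece: segment estimate
  have hseg : ∀ x ∈ B2, ENNReal.ofReal |v x - v (T x)| ≤
      ∫⁻ σ in Ioc (0:ℝ) 1, ENNReal.ofReal r *
        (‖fderiv ℝ v (((1+σ)/2) • x + ((1-σ)/2) • x₀)‖₊ : ℝ≥0∞) := by
    intro x hx
    have hxr : ‖x - x₀‖ < 2*r := by
      rw [← dist_eq_norm]; exact mem_ball.mp hx
    have h1 : |v x - v (T x)| ≤
        ∫ σ in Ioc (0:ℝ) 1, ‖x - T x‖ * ‖fderiv ℝ v (T x + σ • (x - T x))‖ :=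
      seg_bound hv (T x) x
    have hpt : ∀ σ : ℝ, T x + σ • (x - T x) = ((1+σ)/2) • x + ((1-σ)/2) • x₀ := by
      intro σ; simp only [hT]; module
    have hnorm : ‖x - T x‖ ≤ r := by
      have : x - T x = (2⁻¹ : ℝ) • (x - x₀) := by simp only [hT]; module
      rw [this, norm_smul]
      simp only [norm_inv, Real.norm_ofNat]
      linarith
    have h2 : |v x - v (T x)| ≤
        ∫ σ in Ioc (0:ℝ) 1, r * ‖fderiv ℝ v (((1+σ)/2) • x + ((1-σ)/2) • x₀)‖ := by
      refine h1.trans (integral_mono_of_nonneg ?_ ?_ ?_)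
      · filter_upwards with σ using by positivity
      · apply Continuous.integrableOn_Ioc
        exact continuous_const.mul ((hgc.comp (by fun_prop)).norm)
      · filter_upwards with σ
        rw [hpt σ]
        apply mul_le_mul_of_nonneg_right hnorm (norm_nonneg _)
    calc ENNReal.ofReal |v x - v (T x)|
        ≤ ENNReal.ofReal (∫ σ in Ioc (0:ℝ) 1,
            r * ‖fderiv ℝ v (((1+σ)/2) • x + ((1-σ)/2) • x₀)‖) := ENNReal.ofReal_le_ofReal h2
      _ = ∫⁻ σ in Ioc (0:ℝ) 1, ENNReal.ofReal
            (r * ‖fderiv ℝ v (((1+σ)/2) • x + ((1-σ)/2) • x₀)‖) := by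
          apply ofReal_integral_eq_lintegral_ofReal
          · apply Continuous.integrableOn_Ioc
            exact continuous_const.mul ((hgc.comp (by fun_prop)).norm)
          · filter_upwards with σ using by positivity
      _ = ∫⁻ σ in Ioc (0:ℝ) 1, ENNReal.ofReal r *
            (‖fderiv ℝ v (((1+σ)/2) • x + ((1-σ)/2) • x₀)‖₊ : ℝ≥0∞) := by
          congr 1; funext σ
          rw [ENNReal.ofReal_mul hr.le, ofReal_norm_eq_coe_nnnorm]
  -- measurability of the double integrand
  have hFc : Continuous (fun p : Eu n × ℝ =>
      (‖fderiv ℝ v (((1+p.2)/2) • p.1 + ((1-p.2)/2) • x₀)‖₊ : ℝ≥0∞)) := by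
    apply ENNReal.continuous_coe.comp
    apply Continuous.nnnorm
    exact hgc.comp (by fun_prop)
  have hA2 : ∫⁻ x in B2, ENNReal.ofReal |v x - v (T x)| ≤
      ENNReal.ofReal r * (2 ^ n * ∫⁻ x in B2, (‖fderiv ℝ v x‖₊ : ℝ≥0∞)) := by
    calc ∫⁻ x in B2, ENNReal.ofReal |v x - v (T x)|
        ≤ ∫⁻ x in B2, ∫⁻ σ in Ioc (0:ℝ) 1, ENNReal.ofReal r *
            (‖fderiv ℝ v (((1+σ)/2) • x + ((1-σ)/2) • x₀)‖₊ : ℝ≥0∞) :=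
          setLIntegral_mono' measurableSet_ball hseg
      _ = ∫⁻ x in B2, ENNReal.ofReal r * ∫⁻ σ in Ioc (0:ℝ) 1,
            (‖fderiv ℝ v (((1+σ)/2) • x + ((1-σ)/2) • x₀)‖₊ : ℝ≥0∞) := by
          congr 1; funext x
          exact lintegral_const_mul _
            ((hgc.comp (by fun_prop : Continuous fun σ : ℝ =>
              ((1+σ)/2) • x + ((1-σ)/2) • x₀)).nnnorm.measurable.coe_nnreal_ennreal)
      _ = ENNReal.ofReal r * ∫⁻ x in B2, ∫⁻ σ in Ioc (0:ℝ) 1,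
            (‖fderiv ℝ v (((1+σ)/2) • x + ((1-σ)/2) • x₀)‖₊ : ℝ≥0∞) :=
          lintegral_const_mul _ (Measurable.lintegral_prod_right hFc.measurable)
      _ = ENNReal.ofReal r * ∫⁻ σ in Ioc (0:ℝ) 1, ∫⁻ x in B2,
            (‖fderiv ℝ v (((1+σ)/2) • x + ((1-σ)/2) • x₀)‖₊ : ℝ≥0∞) := by
          rw [lintegral_lintegral_swap (hFc.measurable.aemeasurable)]
      _ ≤ ENNReal.ofReal r * ∫⁻ σ in Ioc (0:ℝ) 1,
            (2 ^ n * ∫⁻ x in B2, (‖fderiv ℝ v x‖₊ : ℝ≥0∞)) := by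
          apply mul_le_mul_right
          apply setLIntegral_mono' measurableSet_Ioc
          intro σ hσ
          obtain ⟨hσ0, hσ1⟩ := hσ
          have heq : ∀ x : Eu n, ((1+σ)/2) • x + ((1-σ)/2) • x₀
              = ((1+σ)/2) • x + (((1-σ)/2) • x₀) := fun _ => rfl
          have hsub : ball (((1+σ)/2) • x₀ + ((1-σ)/2) • x₀) (((1+σ)/2) * (2*r)) ⊆ B2 := by
            have h1 : ((1+σ)/2) • x₀ + ((1-σ)/2) • x₀ = x₀ := by module
            rw [h1]
            exact ball_subset_ball (by nlinarith)
          exact cv_smul_le _ (hgc.nnnorm.measurable.coe_nnreal_ennreal) (by linarith)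
            (by linarith) _ _ _ hsub
      _ = ENNReal.ofReal r * ((2 ^ n * ∫⁻ x in B2, (‖fderiv ℝ v x‖₊ : ℝ≥0∞)) * 1) := by
          rw [setLIntegral_const, Real.volume_Ioc]
          norm_num
      _ = ENNReal.ofReal r * (2 ^ n * ∫⁻ x in B2, (‖fderiv ℝ v x‖₊ : ℝ≥0∞)) := by rw [mul_one]
  calc ∫⁻ x in B2, ENNReal.ofReal |v x|
      ≤ ∫⁻ x in B2, (ENNReal.ofReal |v (T x)| + ENNReal.ofReal |v x - v (T x)|) :=
        setLIntegral_mono' measurableSet_ball (fun x _ => hsplit x)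
    _ = (∫⁻ x in B2, ENNReal.ofReal |v (T x)|)
        + ∫⁻ x in B2, ENNReal.ofReal |v x - v (T x)| := by
        apply lintegral_add_left
        exact ENNReal.measurable_ofReal.comp ((hvc.comp (by fun_prop)).abs.measurable)
    _ ≤ 2 ^ n * (∫⁻ x in ball x₀ r, ENNReal.ofReal |v x|)
        + ENNReal.ofReal r * (2 ^ n * ∫⁻ x in B2, (‖fderiv ℝ v x‖₊ : ℝ≥0∞)) :=
        add_le_add hA1 hA2

end SobolevSmall

namespace SobolevSmall
variable {n : ℕ}

lemma cont_integrableOn_ball {F : Type*} [NormedAddCommGroup F] {f : Eu n → F}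
    (hf : Continuous f) (c : Eu n) (R : ℝ) : IntegrableOn f (ball c R) volume :=
  ((hf.locallyIntegrable).integrableOn_isCompact (isCompact_closedBall c R)).mono_set
    ball_subset_closedBall

/-- Poincaré inequality on a ball (in lintegral form). -/
lemma poincare {v : Eu n → ℝ} (hv : ContDiff ℝ 1 v) (x₀ : Eu n) {r : ℝ} (hr : 0 < r) :
    ∫⁻ x in ball x₀ r, ENNReal.ofReal |v x - ⨍ y in ball x₀ r, v y| ≤
      ENNReal.ofReal (2*r) * (2 ^ n * ∫⁻ x in ball x₀ r, (‖fderiv ℝ v x‖₊ : ℝ≥0∞)) := by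
  have hvc : Continuous v := hv.continuous
  have hgc : Continuous (fderiv ℝ v) := hv.continuous_fderiv one_ne_zero
  set B := ball x₀ r with hB
  have hB0 : volume B ≠ 0 := (measure_ball_pos volume x₀ hr).ne'
  have hBtop : volume B ≠ ⊤ := measure_ball_lt_top.ne
  have hBR : (volume B).toReal ≠ 0 := by
    simp [ENNReal.toReal_ne_zero, hB0, hBtop]
  set c := ⨍ y in B, v y with hc
  set gradv : Eu n → ℝ≥0∞ := fun z => (‖fderiv ℝ v z‖₊ : ℝ≥0∞) with hgradv
  have hgradm : Measurable gradv := hgc.nnnorm.measurable.coe_nnreal_ennreal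
  set G := ∫⁻ x in B, gradv x with hG
  -- Step 1: pointwise bound by the double integral
  have step1 : ∀ x : Eu n, ENNReal.ofReal |v x - c| ≤
      (volume B)⁻¹ * ∫⁻ y in B, ENNReal.ofReal |v x - v y| := by
    intro x
    have h1 : v x - c = (volume B).toReal⁻¹ * ∫ y in B, (v x - v y) := by
      rw [integral_sub ((show IntegrableOn (fun _ => v x) (ball x₀ r) volume from integrableOn_const measure_ball_lt_top.ne))
        (cont_integrableOn_ball hvc x₀ r), setIntegral_const, hc, setAverage_eq]
      simp only [smul_eq_mul, measureReal_def]
      field_simp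
      ring
    have h2 : |v x - c| ≤ (volume B).toReal⁻¹ * ∫ y in B, |v x - v y| := by
      rw [h1, abs_mul, abs_of_nonneg (by positivity : (0:ℝ) ≤ (volume B).toReal⁻¹)]
      apply mul_le_mul_of_nonneg_left _ (by positivity)
      simpa using norm_integral_le_integral_norm (μ := volume.restrict B)
        (fun y => v x - v y)
    calc ENNReal.ofReal |v x - c|
        ≤ ENNReal.ofReal ((volume B).toReal⁻¹ * ∫ y in B, |v x - v y|) :=
          ENNReal.ofReal_le_ofReal h2
      _ = ENNReal.ofReal ((volume B).toReal⁻¹) * ENNReal.ofReal (∫ y in B, |v x - v y|) :=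
          ENNReal.ofReal_mul (by positivity)
      _ = (volume B)⁻¹ * ∫⁻ y in B, ENNReal.ofReal |v x - v y| := by
          rw [ofReal_integral_eq_lintegral_ofReal
            ((cont_integrableOn_ball (by fun_prop) x₀ r))
            (Filter.Eventually.of_forall fun y => abs_nonneg _),
            ENNReal.ofReal_inv_of_pos (by positivity), ENNReal.ofReal_toReal hBtop]
  -- double integral
  have hFc : Continuous (fun p : Eu n × Eu n => ENNReal.ofReal |v p.1 - v p.2|) := by
    exact ENNReal.continuous_ofReal.comp ((hvc.comp continuous_fst).sub
      (hvc.comp continuous_snd)).abs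
  have step2 : ∫⁻ x in B, ENNReal.ofReal |v x - c|
      ≤ (volume B)⁻¹ * ∫⁻ x in B, ∫⁻ y in B, ENNReal.ofReal |v x - v y| := by
    calc ∫⁻ x in B, ENNReal.ofReal |v x - c|
        ≤ ∫⁻ x in B, (volume B)⁻¹ * ∫⁻ y in B, ENNReal.ofReal |v x - v y| :=
          setLIntegral_mono' measurableSet_ball fun x _ => step1 x
      _ = (volume B)⁻¹ * ∫⁻ x in B, ∫⁻ y in B, ENNReal.ofReal |v x - v y| :=
          lintegral_const_mul _ (Measurable.lintegral_prod_right hFc.measurable)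
  -- segment bound inside the double integral
  have hseg : ∀ x ∈ B, ∀ y ∈ B, ENNReal.ofReal |v x - v y| ≤
      ∫⁻ σ in Ioc (0:ℝ) 1, ENNReal.ofReal (2*r) * gradv (σ • x + (1-σ) • y) := by
    intro x hx y hy
    have hxy : ‖x - y‖ ≤ 2*r := by
      have h1 : dist x x₀ < r := mem_ball.mp hx
      have h2 : dist y x₀ < r := mem_ball.mp hy
      calc ‖x - y‖ = dist x y := (dist_eq_norm x y).symm
        _ ≤ dist x x₀ + dist y x₀ := dist_triangle_right x y x₀
        _ ≤ 2*r := by linarith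
    have h1 : |v x - v y| ≤
        ∫ σ in Ioc (0:ℝ) 1, ‖x - y‖ * ‖fderiv ℝ v (y + σ • (x - y))‖ := seg_bound hv y x
    have hpt : ∀ σ : ℝ, y + σ • (x - y) = σ • x + (1-σ) • y := by intro σ; module
    have h2 : |v x - v y| ≤
        ∫ σ in Ioc (0:ℝ) 1, (2*r) * ‖fderiv ℝ v (σ • x + (1-σ) • y)‖ := by
      refine h1.trans (integral_mono_of_nonneg ?_ ?_ ?_)
      · filter_upwards with σ using by positivity
      · apply Continuous.integrableOn_Ioc
        exact continuous_const.mul ((hgc.comp (by fun_prop)).norm)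
      · filter_upwards with σ
        rw [hpt σ]
        exact mul_le_mul_of_nonneg_right hxy (norm_nonneg _)
    calc ENNReal.ofReal |v x - v y|
        ≤ ENNReal.ofReal (∫ σ in Ioc (0:ℝ) 1, (2*r) * ‖fderiv ℝ v (σ • x + (1-σ) • y)‖) :=
          ENNReal.ofReal_le_ofReal h2
      _ = ∫⁻ σ in Ioc (0:ℝ) 1, ENNReal.ofReal ((2*r) * ‖fderiv ℝ v (σ • x + (1-σ) • y)‖) := by
          apply ofReal_integral_eq_lintegral_ofReal
          · apply Continuous.integrableOn_Ioc
            exact continuous_const.mul ((hgc.comp (by fun_prop)).norm)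
          · filter_upwards with σ using by positivity
      _ = ∫⁻ σ in Ioc (0:ℝ) 1, ENNReal.ofReal (2*r) * gradv (σ • x + (1-σ) • y) := by
          congr 1; funext σ
          rw [ENNReal.ofReal_mul (by positivity), ofReal_norm_eq_coe_nnnorm]
  -- the triple-integral function
  set F : Eu n → Eu n → ℝ → ℝ≥0∞ := fun x y σ => gradv (σ • x + (1-σ) • y) with hF
  have hFcont : Continuous (fun p : (Eu n × Eu n) × ℝ => F p.1.1 p.1.2 p.2) := by
    apply ENNReal.continuous_coe.comp
    apply Continuous.nnnorm
    exact hgc.comp (by fun_prop)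
  have hFm : ∀ x, Measurable (Function.uncurry fun y σ => F x y σ) := by
    intro x
    exact (hFcont.comp (by fun_prop : Continuous fun p : Eu n × ℝ => ((x, p.1), p.2))).measurable
  have hHm : Measurable (Function.uncurry fun x σ => ∫⁻ y in B, F x y σ) := by
    apply Measurable.lintegral_prod_right (f := fun p : Eu n × ℝ => fun y => F p.1 y p.2)
    exact (hFcont.comp (by fun_prop :
      Continuous fun q : (Eu n × ℝ) × Eu n => ((q.1.1, q.2), q.1.2))).measurable
  -- bound the double integral by the triple integral
  have step3 : ∫⁻ x in B, ∫⁻ y in B, ENNReal.ofReal |v x - v y| ≤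
      ENNReal.ofReal (2*r) * ∫⁻ σ in Ioc (0:ℝ) 1, ∫⁻ x in B, ∫⁻ y in B, F x y σ := by
    calc ∫⁻ x in B, ∫⁻ y in B, ENNReal.ofReal |v x - v y|
        ≤ ∫⁻ x in B, ∫⁻ y in B, ∫⁻ σ in Ioc (0:ℝ) 1, ENNReal.ofReal (2*r) * F x y σ := by
          apply setLIntegral_mono' measurableSet_ball
          intro x hx
          apply setLIntegral_mono' measurableSet_ball
          intro y hy
          exact hseg x hx y hy
      _ = ∫⁻ x in B, ∫⁻ y in B, ENNReal.ofReal (2*r) * ∫⁻ σ in Ioc (0:ℝ) 1, F x y σ := by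
          congr 1; funext x; congr 1; funext y
          exact lintegral_const_mul _ (by
            exact (hFcont.comp (by fun_prop :
              Continuous fun σ : ℝ => (((x:Eu n), (y:Eu n)), σ))).measurable)
      _ = ∫⁻ x in B, ENNReal.ofReal (2*r) * ∫⁻ y in B, ∫⁻ σ in Ioc (0:ℝ) 1, F x y σ := by
          congr 1; funext x
          exact lintegral_const_mul _ (Measurable.lintegral_prod_right (hFm x))
      _ = ENNReal.ofReal (2*r) * ∫⁻ x in B, ∫⁻ y in B, ∫⁻ σ in Ioc (0:ℝ) 1, F x y σ :=
          lintegral_const_mul _ (by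
            apply Measurable.lintegral_prod_right
              (f := fun x : Eu n => fun y : Eu n => ∫⁻ σ in Ioc (0:ℝ) 1, F x y σ)
            apply Measurable.lintegral_prod_right (f := fun p : Eu n × Eu n => fun σ => F p.1 p.2 σ)
            exact hFcont.measurable)
      _ = ENNReal.ofReal (2*r) * ∫⁻ x in B, ∫⁻ σ in Ioc (0:ℝ) 1, ∫⁻ y in B, F x y σ := by
          congr 1; congr 1; funext x
          exact lintegral_lintegral_swap (hFm x).aemeasurable
      _ = ENNReal.ofReal (2*r) * ∫⁻ σ in Ioc (0:ℝ) 1, ∫⁻ x in B, ∫⁻ y in B, F x y σ := by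
          congr 1
          exact lintegral_lintegral_swap hHm.aemeasurable
  -- per-σ bound
  have step4 : ∀ σ ∈ Ioc (0:ℝ) 1, ∫⁻ x in B, ∫⁻ y in B, F x y σ ≤ volume B * (2 ^ n * G) := by
    rintro σ ⟨hσ0, hσ1⟩
    rcases le_or_gt (1/2 : ℝ) σ with hhalf | hhalf
    · -- swap x and y, substitute in x
      have hswap : ∫⁻ x in B, ∫⁻ y in B, F x y σ = ∫⁻ y in B, ∫⁻ x in B, F x y σ :=
        lintegral_lintegral_swap (by
          exact (hFcont.comp (by fun_prop :
            Continuous fun p : Eu n × Eu n => ((p.1, p.2), σ))).measurable.aemeasurable)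
      rw [hswap]
      calc ∫⁻ y in B, ∫⁻ x in B, F x y σ
          ≤ ∫⁻ y in B, (2 ^ n * G) := by
            apply setLIntegral_mono' measurableSet_ball
            intro y hy
            have hsub : ball (σ • x₀ + (1-σ) • y) (σ * r) ⊆ B := by
              apply ball_subset_ball'
              have h1 : σ • x₀ + (1-σ) • y - x₀ = (1-σ) • (y - x₀) := by module
              rw [dist_eq_norm, h1, norm_smul, Real.norm_eq_abs, abs_of_nonneg (by linarith)]
              have h2 : ‖y - x₀‖ < r := by rw [← dist_eq_norm]; exact mem_ball.mp hy
              nlinarith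
            exact cv_smul_le _ hgradm hhalf hσ1 _ _ _ hsub
        _ = (2 ^ n * G) * volume B := setLIntegral_const _ _
        _ = volume B * (2 ^ n * G) := mul_comm _ _
    · -- substitute in y
      calc ∫⁻ x in B, ∫⁻ y in B, F x y σ
          ≤ ∫⁻ x in B, (2 ^ n * G) := by
            apply setLIntegral_mono' measurableSet_ball
            intro x hx
            have hrw : ∫⁻ y in B, F x y σ = ∫⁻ y in B, gradv ((1-σ) • y + σ • x) := by
              congr 1; funext y
              show gradv (σ • x + (1-σ) • y) = gradv ((1-σ) • y + σ • x)
              rw [add_comm]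
            rw [hrw]
            have hsub : ball ((1-σ) • x₀ + σ • x) ((1-σ) * r) ⊆ B := by
              apply ball_subset_ball'
              have h1 : (1-σ) • x₀ + σ • x - x₀ = σ • (x - x₀) := by module
              rw [dist_eq_norm, h1, norm_smul, Real.norm_eq_abs, abs_of_nonneg hσ0.le]
              have h2 : ‖x - x₀‖ < r := by rw [← dist_eq_norm]; exact mem_ball.mp hx
              nlinarith
            exact cv_smul_le _ hgradm (by linarith) (by linarith) _ _ _ hsub
        _ = (2 ^ n * G) * volume B := setLIntegral_const _ _
        _ = volume B * (2 ^ n * G) := mul_comm _ _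
  -- put everything together
  calc ∫⁻ x in B, ENNReal.ofReal |v x - c|
      ≤ (volume B)⁻¹ * ∫⁻ x in B, ∫⁻ y in B, ENNReal.ofReal |v x - v y| := step2
    _ ≤ (volume B)⁻¹ * (ENNReal.ofReal (2*r) *
          ∫⁻ σ in Ioc (0:ℝ) 1, ∫⁻ x in B, ∫⁻ y in B, F x y σ) := mul_le_mul_right step3 _
    _ ≤ (volume B)⁻¹ * (ENNReal.ofReal (2*r) *
          ∫⁻ σ in Ioc (0:ℝ) 1, volume B * (2 ^ n * G)) := by
        apply mul_le_mul_right
        apply mul_le_mul_right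
        exact setLIntegral_mono' measurableSet_Ioc step4
    _ = (volume B)⁻¹ * (ENNReal.ofReal (2*r) * (volume B * (2 ^ n * G))) := by
        rw [setLIntegral_const, Real.volume_Ioc]
        norm_num
    _ = ((volume B)⁻¹ * volume B) * (ENNReal.ofReal (2*r) * (2 ^ n * G)) := by ring
    _ = ENNReal.ofReal (2*r) * (2 ^ n * G) := by
        rw [ENNReal.inv_mul_cancel hB0 hBtop, one_mul]

end SobolevSmall

namespace SobolevSmall
variable {n : ℕ}


set_option synthInstance.maxHeartbeats 1000000
set_option maxHeartbeats 1000000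

lemma transition_deriv_bound : ∃ M : ℝ, 0 < M ∧
    ∀ s : ℝ, |deriv Real.smoothTransition s| ≤ M := by
  have hc : Continuous (deriv Real.smoothTransition) :=
    (Real.smoothTransition.contDiff (n := 1)).continuous_deriv le_rfl
  obtain ⟨C, hC⟩ := isCompact_Icc.exists_bound_of_continuousOn
    (s := Icc (0:ℝ) 1) hc.continuousOn
  refine ⟨max C 1, lt_of_lt_of_le one_pos (le_max_right _ _), fun s => ?_⟩
  rcases le_or_gt s 0 with hs | hs
  · rcases eq_or_lt_of_le hs with rfl | hs'
    · exact le_trans (by simpa using hC 0 ⟨le_rfl, zero_le_one⟩) (le_max_left _ _)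
    · have : deriv Real.smoothTransition s = 0 := by
        have hev : Real.smoothTransition =ᶠ[nhds s] (fun _ => 0) := by
          filter_upwards [Iio_mem_nhds hs'] with t ht
          exact Real.smoothTransition.zero_of_nonpos (le_of_lt ht)
        rw [hev.deriv_eq, deriv_const]
      rw [this]; simp
  · rcases le_or_gt s 1 with hs1 | hs1
    · exact le_trans (by simpa using hC s ⟨hs.le, hs1⟩) (le_max_left _ _)
    · have : deriv Real.smoothTransition s = 0 := by
        have hev : Real.smoothTransition =ᶠ[nhds s] (fun _ => 1) := by
          filter_upwards [Ioi_mem_nhds hs1] with t ht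
          exact Real.smoothTransition.one_of_one_le (le_of_lt ht)
        rw [hev.deriv_eq, deriv_const]
      rw [this]; simp

lemma cutoff_exists : ∃ M : ℝ, 0 < M ∧ ∀ (x₀ : Eu n) (r : ℝ), 0 < r →
    ∃ φ : Eu n → ℝ, ContDiff ℝ 1 φ ∧ HasCompactSupport φ ∧
      (∀ x ∈ ball x₀ r, φ x = 1) ∧ (∀ x, 0 ≤ φ x ∧ φ x ≤ 1) ∧
      (∀ x, x ∉ ball x₀ (2*r) → φ x = 0 ∧ fderiv ℝ φ x = 0) ∧
      (∀ x, ‖fderiv ℝ φ x‖ ≤ M / r) := by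
  obtain ⟨M₀, hM₀, hM⟩ := transition_deriv_bound
  refine ⟨4 * M₀, by positivity, fun x₀ r hr => ?_⟩
  set q : Eu n → ℝ := fun x => (r^2)⁻¹ * ‖x - x₀‖^2 - 1 with hq
  set φ : Eu n → ℝ := fun x => 1 - Real.smoothTransition (q x) with hφ
  have hqd : ∀ x : Eu n, HasFDerivAt q
      ((r^2)⁻¹ • (2 • (innerSL ℝ (x - x₀)).comp (ContinuousLinearMap.id ℝ (Eu n)))) x := by
    intro x
    have h1 : HasFDerivAt (fun x : Eu n => x - x₀) (ContinuousLinearMap.id ℝ (Eu n)) x :=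
      (hasFDerivAt_id x).sub_const x₀
    exact ((h1.norm_sq).const_mul ((r^2)⁻¹)).sub_const 1
  have hqc : ContDiff ℝ 1 q := by
    apply ContDiff.sub _ contDiff_const
    apply ContDiff.mul contDiff_const
    exact ContDiff.norm_sq ℝ (contDiff_id.sub contDiff_const)
  have hφc : ContDiff ℝ 1 φ :=
    contDiff_const.sub ((Real.smoothTransition.contDiff).comp hqc)
  have hφd : ∀ x : Eu n, HasFDerivAt φ
      ((-(deriv Real.smoothTransition (q x))) •
        ((r^2)⁻¹ • (2 • (innerSL ℝ (x - x₀)).comp (ContinuousLinearMap.id ℝ (Eu n))))) x := by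
    intro x
    have h1 : HasDerivAt (fun t => 1 - Real.smoothTransition t)
        (-(deriv Real.smoothTransition (q x))) (q x) := by
      have h2 : HasDerivAt Real.smoothTransition (deriv Real.smoothTransition (q x)) (q x) :=
        ((Real.smoothTransition.contDiff (n := 1)).differentiable one_ne_zero (q x)).hasDerivAt
      simpa using h2.const_sub 1
    exact h1.comp_hasFDerivAt x (hqd x)
  -- pieces
  refine ⟨φ, hφc, ?_, ?_, ?_, ?_, ?_⟩
  · apply HasCompactSupport.intro (isCompact_closedBall x₀ (2*r))
    intro x hx
    have hx2 : 2*r < ‖x - x₀‖ := by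
      rw [← dist_eq_norm]; exact lt_of_not_ge (fun h => hx (mem_closedBall.mpr h))
    have : (1:ℝ) ≤ q x := by
      rw [hq]
      have h4 : (2*r)^2 ≤ ‖x - x₀‖^2 := by nlinarith [norm_nonneg (x - x₀)]
      rw [le_sub_iff_add_le]
      rw [inv_mul_eq_div, le_div_iff₀ (by positivity)]
      nlinarith
    simp [hφ, Real.smoothTransition.one_of_one_le this]
  · intro x hx
    have : q x ≤ 0 := by
      have h1 : ‖x - x₀‖ < r := by rw [← dist_eq_norm]; exact mem_ball.mp hx
      rw [hq, sub_nonpos, inv_mul_eq_div, div_le_one (by positivity)]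
      nlinarith [norm_nonneg (x - x₀)]
    simp [hφ, Real.smoothTransition.zero_of_nonpos this]
  · intro x
    constructor
    · simp only [hφ, sub_nonneg]; exact Real.smoothTransition.le_one _
    · simp only [hφ]
      have := Real.smoothTransition.nonneg (q x)
      linarith
  · intro x hx
    have hx2 : 2*r ≤ ‖x - x₀‖ := by
      rw [← dist_eq_norm]; exact le_of_not_gt (fun h => hx (mem_ball.mpr h))
    have hqx : (1:ℝ) < q x := by
      rw [hq]
      have h4 : (2*r)^2 ≤ ‖x - x₀‖^2 := by nlinarith [norm_nonneg (x - x₀)]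
      rw [lt_sub_iff_add_lt, inv_mul_eq_div, lt_div_iff₀ (by positivity)]
      nlinarith
    have hopen : IsOpen {y : Eu n | 1 < q y} := isOpen_lt continuous_const hqc.continuous
    have hev : φ =ᶠ[nhds x] (fun _ => 0) := by
      filter_upwards [hopen.mem_nhds hqx] with y hy
      simp [hφ, Real.smoothTransition.one_of_one_le (le_of_lt hy)]
    constructor
    · simpa using hev.eq_of_nhds
    · rw [hev.fderiv_eq, fderiv_fun_const]; rfl
  · intro x
    rw [(hφd x).fderiv]
    rcases le_or_gt ‖x - x₀‖ (2*r) with hx2 | hx2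
    · set L := (innerSL ℝ (x - x₀)).comp (ContinuousLinearMap.id ℝ (Eu n)) with hL
      have h1 : ‖L‖ ≤ ‖x - x₀‖ := by
        apply ContinuousLinearMap.opNorm_le_bound _ (norm_nonneg _)
        intro y
        have h2 := norm_inner_le_norm (𝕜 := ℝ) (x - x₀) y
        simp only [hL, ContinuousLinearMap.coe_comp', Function.comp_apply,
          ContinuousLinearMap.coe_id', id_eq, Real.norm_eq_abs] at h2 ⊢
        calc ‖(innerSL ℝ) (x - x₀) y‖ ≤ ‖x - x₀‖ * ‖y‖ := h2
          _ = _ := rfl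
      have h2L : ‖(2:ℕ) • L‖ = 2 * ‖L‖ := by
        rw [← Nat.cast_smul_eq_nsmul ℝ 2 L, norm_smul]
        simp
      calc ‖(-(deriv Real.smoothTransition (q x))) • ((r^2)⁻¹ • ((2:ℕ) • L))‖
          = |deriv Real.smoothTransition (q x)| * ((r^2)⁻¹ * ‖(2:ℕ) • L‖) := by
            rw [norm_smul (-deriv Real.smoothTransition (q x)) ((r^2)⁻¹ • (2:ℕ) • L),
              norm_smul ((r^2:ℝ)⁻¹) ((2:ℕ) • L)]
            simp [abs_of_nonneg (by positivity : (0:ℝ) ≤ (r^2)⁻¹)]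
      _ ≤ M₀ * ((r^2)⁻¹ * (2 * ‖x - x₀‖)) := by
            apply mul_le_mul (hM _) _ (by positivity) hM₀.le
            apply mul_le_mul_of_nonneg_left _ (by positivity)
            rw [h2L]
            exact mul_le_mul_of_nonneg_left h1 (by norm_num)
      _ ≤ 4 * M₀ / r := by
            rw [div_eq_mul_inv]
            have : (r^2)⁻¹ * (2 * ‖x - x₀‖) ≤ (r^2)⁻¹ * (2 * (2*r)) := by
              apply mul_le_mul_of_nonneg_left _ (by positivity)
              linarith
            calc M₀ * ((r^2)⁻¹ * (2 * ‖x - x₀‖)) ≤ M₀ * ((r^2)⁻¹ * (2 * (2*r))) :=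
                mul_le_mul_of_nonneg_left this hM₀.le
              _ = 4 * M₀ * r⁻¹ := by field_simp; ring
    · have hqx : (1:ℝ) < q x := by
        rw [hq]
        have h4 : (2*r)^2 < ‖x - x₀‖^2 := by nlinarith [norm_nonneg (x - x₀)]
        rw [lt_sub_iff_add_lt, inv_mul_eq_div, lt_div_iff₀ (by positivity)]
        nlinarith
      have hd0 : deriv Real.smoothTransition (q x) = 0 := by
        have hopen : IsOpen {y : ℝ | 1 < y} := isOpen_lt continuous_const continuous_id
        have hev : Real.smoothTransition =ᶠ[nhds (q x)] (fun _ => 1) := by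
          filter_upwards [hopen.mem_nhds hqx] with t ht
          exact Real.smoothTransition.one_of_one_le (le_of_lt ht)
        rw [hev.deriv_eq, deriv_const]
      rw [hd0]
      simp
      positivity

end SobolevSmall

namespace SobolevSmall
variable {n : ℕ}

lemma sobolev_cutoff (hn : 2 ≤ n) {v φ : Eu n → ℝ} (hv : ContDiff ℝ 1 v)
    (x₀ : Eu n) {r : ℝ} (hr : 0 < r)
    (hφc : ContDiff ℝ 1 φ) (hφs : HasCompactSupport φ)
    (hφ1 : ∀ x ∈ ball x₀ r, φ x = 1) (hφ01 : ∀ x, 0 ≤ φ x ∧ φ x ≤ 1)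
    (hφ0 : ∀ x, x ∉ ball x₀ (2*r) → φ x = 0 ∧ fderiv ℝ φ x = 0)
    {Mr : ℝ} (hMr : 0 ≤ Mr) (hφd : ∀ x, ‖fderiv ℝ φ x‖ ≤ Mr) :
    eLpNorm v (NNReal.conjExponent n) (volume.restrict (ball x₀ r)) ≤
      (eLpNormLESNormFDerivOneConst (volume : Measure (Eu n)) (NNReal.conjExponent n) : ℝ≥0∞) *
      ((∫⁻ x in ball x₀ (2*r), (‖fderiv ℝ v x‖₊ : ℝ≥0∞)) +
        ENNReal.ofReal Mr * ∫⁻ x in ball x₀ (2*r), ENNReal.ofReal |v x|) := by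
  have hvc : Continuous v := hv.continuous
  have hgc : Continuous (fderiv ℝ v) := hv.continuous_fderiv one_ne_zero
  set p := NNReal.conjExponent n with hp
  set B := ball x₀ r
  set B2 := ball x₀ (2*r)
  set w : Eu n → ℝ := fun x => φ x * v x with hw
  have hwc : ContDiff ℝ 1 w := hφc.mul hv
  have hws : HasCompactSupport w := hφs.mul_right
  have hconj : ((Module.finrank ℝ (Eu n) : ℝ≥0)).HolderConjugate p := by
    rw [finrank_euclideanSpace_fin, hp]
    apply NNReal.HolderConjugate.conjExponent
    exact_mod_cast lt_of_lt_of_le one_lt_two hn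
  have h1 : eLpNorm v p (volume.restrict B) = eLpNorm w p (volume.restrict B) := by
    apply eLpNorm_congr_ae
    filter_upwards [ae_restrict_mem measurableSet_ball] with x hx
    rw [hw]
    simp [hφ1 x hx]
  have h2 : eLpNorm w (p : ℝ≥0∞) (volume.restrict B) ≤ eLpNorm w p volume :=
    eLpNorm_mono_measure _ Measure.restrict_le_self
  have h3 := eLpNorm_le_eLpNorm_fderiv_one (volume : Measure (Eu n)) hwc hws hconj
  -- pointwise bound for the derivative of w
  have h5 : ∀ x, (‖fderiv ℝ w x‖₊ : ℝ≥0∞) ≤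
      B2.indicator (fun x => (‖fderiv ℝ v x‖₊ : ℝ≥0∞) +
        ENNReal.ofReal Mr * ENNReal.ofReal |v x|) x := by
    intro x
    have hd : fderiv ℝ w x = φ x • fderiv ℝ v x + v x • fderiv ℝ φ x :=
      fderiv_mul (hφc.differentiable one_ne_zero x) (hv.differentiable one_ne_zero x)
    by_cases hx : x ∈ B2
    · rw [Set.indicator_of_mem hx]
      have hb : ‖fderiv ℝ w x‖ ≤ ‖fderiv ℝ v x‖ + Mr * |v x| := by
        rw [hd]
        calc ‖φ x • fderiv ℝ v x + v x • fderiv ℝ φ x‖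
            ≤ ‖φ x • fderiv ℝ v x‖ + ‖v x • fderiv ℝ φ x‖ := norm_add_le _ _
          _ ≤ ‖fderiv ℝ v x‖ + Mr * |v x| := by
              apply add_le_add
              · rw [norm_smul, Real.norm_eq_abs, abs_of_nonneg (hφ01 x).1]
                calc φ x * ‖fderiv ℝ v x‖ ≤ 1 * ‖fderiv ℝ v x‖ :=
                    mul_le_mul_of_nonneg_right (hφ01 x).2 (norm_nonneg _)
                  _ = ‖fderiv ℝ v x‖ := one_mul _
              · rw [norm_smul, Real.norm_eq_abs, mul_comm]
                exact mul_le_mul_of_nonneg_right (hφd x) (abs_nonneg _)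
      calc (‖fderiv ℝ w x‖₊ : ℝ≥0∞) = ENNReal.ofReal ‖fderiv ℝ w x‖ :=
          (ofReal_norm_eq_coe_nnnorm _).symm
        _ ≤ ENNReal.ofReal (‖fderiv ℝ v x‖ + Mr * |v x|) := ENNReal.ofReal_le_ofReal hb
        _ ≤ (‖fderiv ℝ v x‖₊ : ℝ≥0∞) + ENNReal.ofReal Mr * ENNReal.ofReal |v x| := by
            rw [ENNReal.ofReal_add (norm_nonneg _) (by positivity),
              ofReal_norm_eq_coe_nnnorm, ENNReal.ofReal_mul hMr]
    · rw [Set.indicator_of_notMem hx]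
      have h0 := hφ0 x hx
      rw [hd, h0.1, h0.2]
      simp
  have h6 : eLpNorm (fderiv ℝ w) 1 volume ≤
      (∫⁻ x in B2, (‖fderiv ℝ v x‖₊ : ℝ≥0∞)) +
        ENNReal.ofReal Mr * ∫⁻ x in B2, ENNReal.ofReal |v x| := by
    rw [eLpNorm_one_eq_lintegral_nnnorm]
    calc ∫⁻ x, (‖fderiv ℝ w x‖₊ : ℝ≥0∞)
        ≤ ∫⁻ x, B2.indicator (fun x => (‖fderiv ℝ v x‖₊ : ℝ≥0∞) +
            ENNReal.ofReal Mr * ENNReal.ofReal |v x|) x := lintegral_mono h5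
      _ = ∫⁻ x in B2, ((‖fderiv ℝ v x‖₊ : ℝ≥0∞) +
            ENNReal.ofReal Mr * ENNReal.ofReal |v x|) :=
          lintegral_indicator measurableSet_ball _
      _ = (∫⁻ x in B2, (‖fderiv ℝ v x‖₊ : ℝ≥0∞)) +
            ∫⁻ x in B2, ENNReal.ofReal Mr * ENNReal.ofReal |v x| :=
          lintegral_add_left (hgc.nnnorm.measurable.coe_nnreal_ennreal) _
      _ = (∫⁻ x in B2, (‖fderiv ℝ v x‖₊ : ℝ≥0∞)) +
            ENNReal.ofReal Mr * ∫⁻ x in B2, ENNReal.ofReal |v x| := by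
          congr 1
          exact lintegral_const_mul _ (ENNReal.measurable_ofReal.comp hvc.abs.measurable)
  calc eLpNorm v (p : ℝ≥0∞) (volume.restrict B) = eLpNorm w p (volume.restrict B) := h1
    _ ≤ eLpNorm w p volume := h2
    _ ≤ (eLpNormLESNormFDerivOneConst (volume : Measure (Eu n)) p : ℝ≥0∞) *
        eLpNorm (fderiv ℝ w) 1 volume := h3
    _ ≤ _ := mul_le_mul_right h6 _

end SobolevSmall

namespace SobolevSmall
variable {n : ℕ}


lemma holder_small (hn : 2 ≤ n) {t : ℝ} (ht : t = (n:ℝ)/((n:ℝ)-1))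
    {u : Eu n → ℝ} (hu : Continuous u) (x₀ : Eu n) (r : ℝ) :
    ∫⁻ x in ball x₀ r, ENNReal.ofReal |u x| ≤
      (volume {x ∈ ball x₀ r | u x ≠ 0}) ^ (1/(n:ℝ)) *
      (∫⁻ x in ball x₀ r, (ENNReal.ofReal |u x|) ^ t) ^ (1/t) := by
  have hn1 : (1:ℝ) < n := by exact_mod_cast lt_of_lt_of_le one_lt_two hn
  have hpq : Real.HolderConjugate (n:ℝ) t := by
    rw [Real.holderConjugate_iff]
    constructor
    · exact hn1
    · rw [ht]; field_simp; ring
  set B := ball x₀ r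
  set S : Set (Eu n) := {y | u y ≠ 0} with hS
  have hSopen : IsOpen S := isOpen_compl_singleton.preimage hu
  set f : Eu n → ℝ≥0∞ := S.indicator (fun _ => (1:ℝ≥0∞)) with hf
  set g : Eu n → ℝ≥0∞ := fun x => ENNReal.ofReal |u x| with hg
  have hfg : ∀ x, (f * g) x = g x := by
    intro x
    by_cases hx : u x = 0
    · have : g x = 0 := by simp [hg, hx]
      simp [this]
    · simp [hf, Pi.mul_apply, Set.indicator_of_mem (show x ∈ S from hx), one_mul]
  have hfm : AEMeasurable f (volume.restrict B) :=
    (measurable_const.indicator hSopen.measurableSet).aemeasurable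
  have hgm : AEMeasurable g (volume.restrict B) :=
    (ENNReal.measurable_ofReal.comp hu.abs.measurable).aemeasurable
  have key := ENNReal.lintegral_mul_le_Lp_mul_Lq (volume.restrict B) hpq hfm hgm
  rw [lintegral_congr hfg] at key
  have hfpow : ∫⁻ x in B, f x ^ (n:ℝ) = volume {x ∈ B | u x ≠ 0} := by
    have h1 : ∀ x, f x ^ (n:ℝ) = S.indicator (fun _ => (1:ℝ≥0∞)) x := by
      intro x
      by_cases hx : x ∈ S
      · simp [hf, Set.indicator_of_mem hx]
      · simp [hf, Set.indicator_of_notMem hx,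
          ENNReal.zero_rpow_of_pos (by positivity : (0:ℝ) < n)]
    rw [lintegral_congr h1, lintegral_indicator hSopen.measurableSet, setLIntegral_one,
      Measure.restrict_apply hSopen.measurableSet]
    congr 1
    ext x
    simp [hS, and_comm]
  rw [hfpow] at key
  exact key
end SobolevSmall

namespace SobolevSmall
variable {n : ℕ}

/-- Core estimate, in `ℝ≥0∞`. -/
lemma core (hn : 2 ≤ n) {t : ℝ} (ht : t = (n:ℝ)/((n:ℝ)-1))
    {M : ℝ} (hM : 0 < M)
    (hMcut : ∀ (x₀ : Eu n) (r : ℝ), 0 < r →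
      ∃ φ : Eu n → ℝ, ContDiff ℝ 1 φ ∧ HasCompactSupport φ ∧
        (∀ x ∈ ball x₀ r, φ x = 1) ∧ (∀ x, 0 ≤ φ x ∧ φ x ≤ 1) ∧
        (∀ x, x ∉ ball x₀ (2*r) → φ x = 0 ∧ fderiv ℝ φ x = 0) ∧
        (∀ x, ‖fderiv ℝ φ x‖ ≤ M / r))
    {u : Eu n → ℝ} (hu : ContDiff ℝ 1 u) (x₀ : Eu n) {r : ℝ} (hr : 0 < r)
    {γ : ℝ} (hγ0 : 0 < γ)
    (hA : volume {x ∈ ball x₀ r | u x ≠ 0} ≤ ENNReal.ofReal γ * volume (ball x₀ r)) :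
    eLpNorm u (NNReal.conjExponent n) (volume.restrict (ball x₀ r)) ≤
      (ENNReal.ofReal γ) ^ (1/(n:ℝ)) *
        eLpNorm u (NNReal.conjExponent n) (volume.restrict (ball x₀ r)) +
      ((eLpNormLESNormFDerivOneConst (volume : Measure (Eu n)) (NNReal.conjExponent n) : ℝ≥0∞) *
        (1 + (2^n * 2^n * ENNReal.ofReal (2*M) + 2^n * ENNReal.ofReal M))) *
        ∫⁻ x in ball x₀ (2*r), (‖fderiv ℝ u x‖₊ : ℝ≥0∞) := by
  have hn1 : (1:ℝ) < n := by exact_mod_cast lt_of_lt_of_le one_lt_two hn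
  have hnne : (n:ℝ) ≠ 0 := by positivity
  have ht1 : 1 < t := by rw [ht]; rw [lt_div_iff₀ (by linarith)]; linarith
  have huc : Continuous u := hu.continuous
  have hgc : Continuous (fderiv ℝ u) := hu.continuous_fderiv one_ne_zero
  set B := ball x₀ r with hB
  set B2 := ball x₀ (2*r) with hB2
  set p : ℝ≥0 := NNReal.conjExponent n with hp
  have hpt : (p : ℝ) = t := by
    rw [hp, NNReal.conjExponent, ht]
    rw [NNReal.coe_div, NNReal.coe_sub (by exact_mod_cast hn1.le)]
    norm_num
  have hp1 : (1:ℝ≥0∞) ≤ (p : ℝ≥0∞) := by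
    rw [show ((1:ℝ≥0∞)) = ((1:ℝ≥0) : ℝ≥0∞) from rfl, ENNReal.coe_le_coe]
    have : (1:ℝ) ≤ (p:ℝ) := by rw [hpt]; linarith
    exact_mod_cast this
  have hp0 : (p : ℝ≥0∞) ≠ 0 := by
    intro h; rw [h] at hp1; exact (by norm_num : ¬ ((1:ℝ≥0∞) ≤ 0)) hp1
  have hptop : (p : ℝ≥0∞) ≠ ⊤ := ENNReal.coe_ne_top
  have hptoReal : (p : ℝ≥0∞).toReal = t := by rw [ENNReal.coe_toReal, hpt]
  have hμB0 : volume B ≠ 0 := (measure_ball_pos volume x₀ hr).ne'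
  have hμBtop : volume B ≠ ⊤ := measure_ball_lt_top.ne
  have hμBR : (volume B).toReal ≠ 0 := by simp [ENNReal.toReal_ne_zero, hμB0, hμBtop]
  set c := ⨍ x in B, u x with hc
  set w : Eu n → ℝ := fun x => u x - c with hw
  have hwc : ContDiff ℝ 1 w := hu.sub contDiff_const
  have hfd : ∀ x, fderiv ℝ w x = fderiv ℝ u x := fun x => fderiv_sub_const c
  set Gl := ∫⁻ x in B2, (‖fderiv ℝ u x‖₊ : ℝ≥0∞) with hGl
  set N := eLpNorm u (p : ℝ≥0∞) (volume.restrict B) with hN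
  set K := (eLpNormLESNormFDerivOneConst (volume : Measure (Eu n)) (p:ℝ)) with hK
  -- N as lintegral
  have hNt : N = (∫⁻ x in B, (ENNReal.ofReal |u x|) ^ t) ^ (1/t) := by
    rw [hN, eLpNorm_eq_lintegral_rpow_nnnorm hp0 hptop, hptoReal]
    congr 1
    apply lintegral_congr
    intro x
    rw [← ofReal_norm_eq_coe_nnnorm, Real.norm_eq_abs]
  -- triangle inequality
  have step_tri : N ≤ eLpNorm w (p:ℝ≥0∞) (volume.restrict B)
      + (‖c‖₊ : ℝ≥0∞) * (volume B) ^ (1/t) := by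
    have hsum : u = (fun x => w x + c) := by funext x; rw [hw]; ring
    have h1 : eLpNorm u (p:ℝ≥0∞) (volume.restrict B)
        ≤ eLpNorm w (p:ℝ≥0∞) (volume.restrict B)
          + eLpNorm (fun _ : Eu n => c) (p:ℝ≥0∞) (volume.restrict B) := by
      conv_lhs => rw [hsum]
      exact eLpNorm_add_le (hwc.continuous.aestronglyMeasurable)
        aestronglyMeasurable_const hp1
    have h2 : eLpNorm (fun _ : Eu n => c) (p:ℝ≥0∞) (volume.restrict B)
        = (‖c‖₊ : ℝ≥0∞) * (volume B) ^ (1/t) := by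
      have hres0 : volume.restrict B ≠ 0 := by
        intro h0
        apply hμB0
        rw [← Measure.restrict_apply_univ B, h0]
        simp
      rw [eLpNorm_const c hp0 hres0, Measure.restrict_apply_univ, hptoReal]; rfl
    rw [← h2]; exact h1
  -- bound the constant term
  have step_const : (‖c‖₊ : ℝ≥0∞) * (volume B) ^ (1/t)
      ≤ (ENNReal.ofReal γ) ^ (1/(n:ℝ)) * N := by
    have habs : |c| ≤ (volume B).toReal⁻¹ * ∫ x in B, |u x| := by
      rw [hc, setAverage_eq, smul_eq_mul, abs_mul,
        abs_of_nonneg (by positivity : (0:ℝ) ≤ (volume.real B)⁻¹)]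
      apply mul_le_mul_of_nonneg_left _ (by positivity)
      simpa using norm_integral_le_integral_norm (μ := volume.restrict B) u
    have hcoe : (‖c‖₊ : ℝ≥0∞) ≤ (volume B)⁻¹ * ∫⁻ x in B, ENNReal.ofReal |u x| := by
      calc (‖c‖₊ : ℝ≥0∞) = ENNReal.ofReal |c| := by
            rw [← ofReal_norm_eq_coe_nnnorm, Real.norm_eq_abs]
        _ ≤ ENNReal.ofReal ((volume B).toReal⁻¹ * ∫ x in B, |u x|) :=
            ENNReal.ofReal_le_ofReal habs
        _ = ENNReal.ofReal ((volume B).toReal⁻¹) * ENNReal.ofReal (∫ x in B, |u x|) :=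
            ENNReal.ofReal_mul (by positivity)
        _ = (volume B)⁻¹ * ∫⁻ x in B, ENNReal.ofReal |u x| := by
            rw [ofReal_integral_eq_lintegral_ofReal (cont_integrableOn_ball huc.abs x₀ r)
              (Filter.Eventually.of_forall fun y => abs_nonneg _),
              ENNReal.ofReal_inv_of_pos (by positivity), ENNReal.ofReal_toReal hμBtop]
    have hhold : ∫⁻ x in B, ENNReal.ofReal |u x|
        ≤ (ENNReal.ofReal γ) ^ (1/(n:ℝ)) * (volume B) ^ (1/(n:ℝ)) * N := by
      calc ∫⁻ x in B, ENNReal.ofReal |u x|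
          ≤ (volume {x ∈ B | u x ≠ 0}) ^ (1/(n:ℝ)) *
            (∫⁻ x in B, (ENNReal.ofReal |u x|) ^ t) ^ (1/t) :=
            holder_small hn ht huc x₀ r
        _ = (volume {x ∈ B | u x ≠ 0}) ^ (1/(n:ℝ)) * N := by rw [← hNt]
        _ ≤ (ENNReal.ofReal γ * volume B) ^ (1/(n:ℝ)) * N := by
            apply mul_le_mul_left
            exact ENNReal.rpow_le_rpow hA (by positivity)
        _ = (ENNReal.ofReal γ) ^ (1/(n:ℝ)) * (volume B) ^ (1/(n:ℝ)) * N := by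
            rw [ENNReal.mul_rpow_of_nonneg _ _ (by positivity)]
    calc (‖c‖₊ : ℝ≥0∞) * (volume B) ^ (1/t)
        ≤ ((volume B)⁻¹ * ((ENNReal.ofReal γ) ^ (1/(n:ℝ)) * (volume B) ^ (1/(n:ℝ)) * N))
            * (volume B) ^ (1/t) := by
          apply mul_le_mul_left
          exact le_trans hcoe (mul_le_mul_right hhold _)
      _ = (ENNReal.ofReal γ) ^ (1/(n:ℝ)) * N *
            ((volume B)⁻¹ * ((volume B) ^ (1/(n:ℝ)) * (volume B) ^ (1/t))) := by ring
      _ = (ENNReal.ofReal γ) ^ (1/(n:ℝ)) * N := by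
          rw [← ENNReal.rpow_add _ _ hμB0 hμBtop]
          have : 1/(n:ℝ) + 1/t = 1 := by
            rw [ht]; field_simp; ring
          rw [this, ENNReal.rpow_one, ENNReal.inv_mul_cancel hμB0 hμBtop, mul_one]
  -- bound the oscillation term via Sobolev + annulus + Poincaré
  have step_main : eLpNorm w (p:ℝ≥0∞) (volume.restrict B) ≤
      ((K : ℝ≥0∞) * (1 + (2^n * 2^n * ENNReal.ofReal (2*M) + 2^n * ENNReal.ofReal M))) * Gl := by
    obtain ⟨φ, hφc, hφs, hφ1, hφ01, hφ0, hφd⟩ := hMcut x₀ r hr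
    have hsob := sobolev_cutoff hn hwc x₀ hr hφc hφs hφ1 hφ01 hφ0
      (by positivity : (0:ℝ) ≤ M/r) hφd
    have hGlw : ∫⁻ x in B2, (‖fderiv ℝ w x‖₊ : ℝ≥0∞) = Gl := by
      apply lintegral_congr; intro x; rw [hfd]
    have hpoin : ∫⁻ x in B, ENNReal.ofReal |w x| ≤ ENNReal.ofReal (2*r) * (2^n * Gl) := by
      calc ∫⁻ x in B, ENNReal.ofReal |w x|
          ≤ ENNReal.ofReal (2*r) * (2^n * ∫⁻ x in B, (‖fderiv ℝ u x‖₊ : ℝ≥0∞)) := by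
            have := poincare hu x₀ hr
            exact this
        _ ≤ ENNReal.ofReal (2*r) * (2^n * Gl) := by
            apply mul_le_mul_right
            apply mul_le_mul_right
            exact lintegral_mono_set (ball_subset_ball (by linarith))
    have hann : ∫⁻ x in B2, ENNReal.ofReal |w x| ≤
        2^n * (ENNReal.ofReal (2*r) * (2^n * Gl)) + ENNReal.ofReal r * (2^n * Gl) := by
      calc ∫⁻ x in B2, ENNReal.ofReal |w x|
          ≤ 2^n * (∫⁻ x in B, ENNReal.ofReal |w x|)
            + ENNReal.ofReal r * (2^n * ∫⁻ x in B2, (‖fderiv ℝ w x‖₊ : ℝ≥0∞)) :=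
            annulus hwc x₀ hr
        _ ≤ 2^n * (ENNReal.ofReal (2*r) * (2^n * Gl)) + ENNReal.ofReal r * (2^n * Gl) := by
            apply add_le_add
            · exact mul_le_mul_right hpoin _
            · rw [hGlw]
    have hMr2 : ENNReal.ofReal (M/r) * ENNReal.ofReal (2*r) = ENNReal.ofReal (2*M) := by
      rw [← ENNReal.ofReal_mul (by positivity)]
      congr 1
      field_simp
    have hMr1 : ENNReal.ofReal (M/r) * ENNReal.ofReal r = ENNReal.ofReal M := by
      rw [← ENNReal.ofReal_mul (by positivity)]
      congr 1
      field_simp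
    calc eLpNorm w (p:ℝ≥0∞) (volume.restrict B)
        ≤ (K : ℝ≥0∞) * ((∫⁻ x in B2, (‖fderiv ℝ w x‖₊ : ℝ≥0∞)) +
            ENNReal.ofReal (M/r) * ∫⁻ x in B2, ENNReal.ofReal |w x|) := by
          rw [hK]
          exact hsob
      _ ≤ (K : ℝ≥0∞) * (Gl + ENNReal.ofReal (M/r) *
            (2^n * (ENNReal.ofReal (2*r) * (2^n * Gl)) + ENNReal.ofReal r * (2^n * Gl))) := by
          apply mul_le_mul_right
          rw [hGlw]
          exact add_le_add_right (mul_le_mul_right hann _) _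
      _ = (K : ℝ≥0∞) * (Gl + (2^n * 2^n * (ENNReal.ofReal (M/r) * ENNReal.ofReal (2*r)) * Gl
            + 2^n * (ENNReal.ofReal (M/r) * ENNReal.ofReal r) * Gl)) := by ring
      _ = ((K : ℝ≥0∞) * (1 + (2^n * 2^n * ENNReal.ofReal (2*M) + 2^n * ENNReal.ofReal M))) * Gl := by
          rw [hMr2, hMr1]; ring
  calc N ≤ eLpNorm w (p:ℝ≥0∞) (volume.restrict B) + (‖c‖₊ : ℝ≥0∞) * (volume B) ^ (1/t) :=
      step_tri
    _ ≤ ((K:ℝ≥0∞) * (1 + (2^n * 2^n * ENNReal.ofReal (2*M) + 2^n * ENNReal.ofReal M))) * Gl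
        + (ENNReal.ofReal γ) ^ (1/(n:ℝ)) * N := add_le_add step_main step_const
    _ = (ENNReal.ofReal γ) ^ (1/(n:ℝ)) * N
        + ((eLpNormLESNormFDerivOneConst (volume : Measure (Eu n)) (p:ℝ) : ℝ≥0∞) *
          (1 + (2^n * 2^n * ENNReal.ofReal (2*M) + 2^n * ENNReal.ofReal M))) * Gl := by
        rw [hK]; ring

end SobolevSmall

namespace SobolevSmall


lemma rpow_ball_identity {n : ℕ} (hn : 2 ≤ n) {r ω t : ℝ} (hr : 0 < r) (hω : 0 < ω)
    (ht : t = (n:ℝ)/((n:ℝ)-1)) :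
    ((r^n*ω)⁻¹)^(1/t) = 2^n * ω^(1/(n:ℝ)) * r * ((2*r)^n*ω)⁻¹ := by
  have hn1 : (1:ℝ) < n := by exact_mod_cast lt_of_lt_of_le one_lt_two hn
  have hnne : (n:ℝ) ≠ 0 := by positivity
  have hx : (0:ℝ) < r^n*ω := by positivity
  have h1t : 1/t = 1 - 1/(n:ℝ) := by rw [ht]; field_simp
  have key : ((r^n*ω)⁻¹)^(1/t) = r * ω^(1/(n:ℝ)) * (r^n*ω)⁻¹ := by
    rw [← Real.rpow_neg_one (r^n*ω), ← Real.rpow_mul hx.le, h1t]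
    have he : (-1 : ℝ) * (1 - 1/(n:ℝ)) = 1/(n:ℝ) + (-1) := by ring
    rw [he, Real.rpow_add hx, Real.rpow_neg_one]
    congr 1
    rw [Real.mul_rpow (by positivity) hω.le]
    congr 1
    rw [← Real.rpow_natCast r n, ← Real.rpow_mul hr.le]
    rw [mul_one_div_cancel hnne, Real.rpow_one]
  rw [key, mul_pow]
  have h2 : ((2:ℝ)^n * r^n * ω)⁻¹ = (2^n)⁻¹ * (r^n*ω)⁻¹ := by
    rw [mul_assoc, mul_inv]
  rw [h2]
  have h2n : (0:ℝ) < 2^n := by positivity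
  field_simp

end SobolevSmall

open SobolevSmall in
/-- (Lemma 2.1, Euclidean case) Let `t = n/(n-1)`. There is `C = C(n)` such that if
`u` is continuously differentiable, `B = B(x₀,r)` is a Euclidean ball, and the set
`A = {x ∈ B : u(x) ≠ 0}` satisfies `Lⁿ(A) ≤ γ Lⁿ(B)` with `0 < γ < 1`, then
`(⨍_B |u|^t)^{1/t} ≤ C/(1 - γ^{1-1/t}) · r · ⨍_{2B} ‖∇u‖`. -/
theorem sobolev_inequality_small_support
    (n : ℕ) (hn : 2 ≤ n) (t : ℝ) (ht : t = (n : ℝ) / ((n : ℝ) - 1)) :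
    ∃ C : ℝ, 0 < C ∧
      ∀ (u : EuclideanSpace ℝ (Fin n) → ℝ), ContDiff ℝ 1 u →
      ∀ (x₀ : EuclideanSpace ℝ (Fin n)) (r : ℝ), 0 < r →
      ∀ γ : ℝ, 0 < γ → γ < 1 →
      volume {x ∈ ball x₀ r | u x ≠ 0} ≤ ENNReal.ofReal γ * volume (ball x₀ r) →
      (⨍ x in ball x₀ r, |u x| ^ t ∂volume) ^ (1 / t) ≤
        C / (1 - γ ^ (1 - 1 / t)) * r * ⨍ x in ball x₀ (2 * r), ‖fderiv ℝ u x‖ ∂volume := by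
  have hn1 : (1:ℝ) < n := by exact_mod_cast lt_of_lt_of_le one_lt_two hn
  have hnne : (n:ℝ) ≠ 0 := by positivity
  have ht1 : 1 < t := by rw [ht, lt_div_iff₀ (by linarith)]; linarith
  have ht0 : 0 < t := lt_trans one_pos ht1
  have h1t : (1:ℝ) - 1/t = 1/(n:ℝ) := by rw [ht]; field_simp; ring
  obtain ⟨M, hM0, hMcut⟩ := cutoff_exists (n := n)
  set Kc : ℝ≥0 :=
    eLpNormLESNormFDerivOneConst (volume : Measure (Eu n)) ((NNReal.conjExponent n : ℝ≥0) : ℝ)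
    with hKc
  set ω : ℝ := (volume (ball (0 : Eu n) 1)).toReal with hω'
  have hω : 0 < ω :=
    ENNReal.toReal_pos (measure_ball_pos volume _ one_pos).ne' measure_ball_lt_top.ne
  set S : ℝ := 1 + (2^n * 2^n * (2*M) + 2^n * M) with hS'
  have hS : 0 < S := by
    have h1 : (0:ℝ) ≤ 2^n * 2^n * (2*M) := by positivity
    have h2 : (0:ℝ) ≤ 2^n * M := by positivity
    rw [hS']; linarith
  refine ⟨((Kc:ℝ)+1) * S * (2^n * ω^(1/(n:ℝ))), ?_, ?_⟩
  · apply mul_pos (mul_pos (by positivity) hS)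
    exact mul_pos (by positivity) (Real.rpow_pos_of_pos hω _)
  intro u hu x₀ r hr γ hγ0 hγ1 hAvol
  haveI : Nontrivial (EuclideanSpace ℝ (Fin n)) := by
    have h0 : (0:ℕ) < n := by omega
    refine ⟨⟨EuclideanSpace.single ⟨0, h0⟩ 1, 0, ?_⟩⟩
    intro h
    have h2 := congrArg (fun v => v ⟨0, h0⟩) h
    simp [EuclideanSpace.single_apply] at h2
  have huc : Continuous u := hu.continuous
  have hgc : Continuous (fderiv ℝ u) := hu.continuous_fderiv one_ne_zero
  set B := ball x₀ r with hB
  set B2 := ball x₀ (2*r) with hB2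
  set p : ℝ≥0 := NNReal.conjExponent n with hp
  have hpt : (p : ℝ) = t := by
    rw [hp, NNReal.conjExponent, ht, NNReal.coe_div, NNReal.coe_sub (by exact_mod_cast hn1.le)]
    norm_num
  have hp0 : (p : ℝ≥0∞) ≠ 0 := by
    simp only [ne_eq, ENNReal.coe_eq_zero]
    intro h
    rw [h] at hpt
    simp at hpt
    linarith
  have hptop : (p : ℝ≥0∞) ≠ ⊤ := ENNReal.coe_ne_top
  have hptoReal : (p : ℝ≥0∞).toReal = t := by rw [ENNReal.coe_toReal, hpt]
  have hμB0 : volume B ≠ 0 := (measure_ball_pos volume x₀ hr).ne'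
  have hμBtop : volume B ≠ ⊤ := measure_ball_lt_top.ne
  have hμB20 : volume B2 ≠ 0 := (measure_ball_pos volume x₀ (by linarith)).ne'
  have hμB2top : volume B2 ≠ ⊤ := measure_ball_lt_top.ne
  set Gl := ∫⁻ x in B2, (‖fderiv ℝ u x‖₊ : ℝ≥0∞) with hGl
  set N := eLpNorm u (p : ℝ≥0∞) (volume.restrict B) with hN
  -- finiteness
  have hGltop : Gl ≠ ⊤ := by
    have hint : IntegrableOn (fderiv ℝ u) B2 volume := cont_integrableOn_ball hgc x₀ (2*r)
    exact hint.2.ne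
  have hNtop : N ≠ ⊤ := by
    obtain ⟨Cb, hCb⟩ := (isCompact_closedBall x₀ r).exists_bound_of_continuousOn
      huc.continuousOn
    have hae : ∀ᵐ x ∂(volume.restrict B), ‖u x‖ ≤ Cb :=
      (ae_restrict_iff' measurableSet_ball).mpr
        (Filter.Eventually.of_forall fun x hx => hCb x (ball_subset_closedBall hx))
    have hle := eLpNorm_le_of_ae_bound (p := (p:ℝ≥0∞)) hae
    apply ne_top_of_le_ne_top _ hle
    apply ENNReal.mul_ne_top _ ENNReal.ofReal_ne_top
    rw [Measure.restrict_apply_univ]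
    exact ENNReal.rpow_ne_top_of_nonneg (by positivity) hμBtop
  -- core estimate
  have hcore := core hn ht hM0 hMcut hu x₀ hr hγ0 hAvol
  set CC : ℝ≥0∞ := (Kc : ℝ≥0∞) * (1 + (2^n * 2^n * ENNReal.ofReal (2*M) + 2^n * ENNReal.ofReal M))
    with hCC
  have hCCtop : CC ≠ ⊤ := by
    rw [hCC]
    apply ENNReal.mul_ne_top ENNReal.coe_ne_top
    apply ENNReal.add_ne_top.mpr
    constructor
    · exact ENNReal.one_ne_top
    apply ENNReal.add_ne_top.mpr
    constructor
    · exact ENNReal.mul_ne_top (ENNReal.mul_ne_top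
        (ENNReal.pow_ne_top (by norm_num)) (ENNReal.pow_ne_top (by norm_num)))
        ENNReal.ofReal_ne_top
    · exact ENNReal.mul_ne_top (ENNReal.pow_ne_top (by norm_num)) ENNReal.ofReal_ne_top
  have hCCto : CC.toReal = (Kc:ℝ) * S := by
    rw [hCC, ENNReal.toReal_mul, ENNReal.coe_toReal]
    congr 1
    rw [ENNReal.toReal_add ENNReal.one_ne_top (by
      apply ENNReal.add_ne_top.mpr
      exact ⟨ENNReal.mul_ne_top (ENNReal.mul_ne_top (ENNReal.pow_ne_top (by norm_num))
        (ENNReal.pow_ne_top (by norm_num))) ENNReal.ofReal_ne_top,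
        ENNReal.mul_ne_top (ENNReal.pow_ne_top (by norm_num)) ENNReal.ofReal_ne_top⟩)]
    rw [ENNReal.toReal_add
      (ENNReal.mul_ne_top (ENNReal.mul_ne_top (ENNReal.pow_ne_top (by norm_num))
        (ENNReal.pow_ne_top (by norm_num))) ENNReal.ofReal_ne_top)
      (ENNReal.mul_ne_top (ENNReal.pow_ne_top (by norm_num)) ENNReal.ofReal_ne_top)]
    rw [ENNReal.toReal_mul, ENNReal.toReal_mul, ENNReal.toReal_mul, ENNReal.toReal_pow,
      ENNReal.toReal_ofReal (by positivity), ENNReal.toReal_ofReal hM0.le, hS']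
    norm_num
  -- pass to real numbers
  set N' := N.toReal with hN'
  set G' := Gl.toReal with hG'
  set a := γ ^ (1/(n:ℝ)) with ha
  have ha1 : a < 1 := Real.rpow_lt_one hγ0.le hγ1 (by positivity)
  have ha0 : 0 ≤ a := Real.rpow_nonneg hγ0.le _
  have hgam : (ENNReal.ofReal γ) ^ (1/(n:ℝ)) = ENNReal.ofReal a := by
    rw [ha, ENNReal.ofReal_rpow_of_nonneg hγ0.le (by positivity)]
  have hreal : N' ≤ a * N' + CC.toReal * G' := by
    have h2 : ((ENNReal.ofReal γ) ^ (1/(n:ℝ)) * N + CC * Gl).toReal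
        = a * N' + CC.toReal * G' := by
      rw [ENNReal.toReal_add (ENNReal.mul_ne_top (by
          rw [hgam]; exact ENNReal.ofReal_ne_top) hNtop)
        (ENNReal.mul_ne_top hCCtop hGltop), ENNReal.toReal_mul, ENNReal.toReal_mul,
        hgam, ENNReal.toReal_ofReal ha0]
    calc N' ≤ ((ENNReal.ofReal γ) ^ (1/(n:ℝ)) * N + CC * Gl).toReal :=
        ENNReal.toReal_mono (by
          apply ENNReal.add_ne_top.mpr
          exact ⟨ENNReal.mul_ne_top (by rw [hgam]; exact ENNReal.ofReal_ne_top) hNtop,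
            ENNReal.mul_ne_top hCCtop hGltop⟩) hcore
      _ = a * N' + CC.toReal * G' := h2
  have hN'0 : 0 ≤ N' := ENNReal.toReal_nonneg
  have hG'0 : 0 ≤ G' := ENNReal.toReal_nonneg
  have habsorb : N' ≤ (Kc:ℝ) * S * G' / (1 - a) := by
    rw [le_div_iff₀ (by linarith)]
    rw [hCCto] at hreal
    nlinarith
  -- convert the goal
  have hNt : N = (∫⁻ x in B, (ENNReal.ofReal |u x|) ^ t) ^ (1/t) := by
    rw [hN, eLpNorm_eq_lintegral_rpow_nnnorm hp0 hptop, hptoReal]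
    congr 1
    apply lintegral_congr
    intro x
    rw [← ofReal_norm_eq_coe_nnnorm, Real.norm_eq_abs]
  have hbase : ∫ x in B, |u x|^t = N'^t := by
    rw [integral_eq_lintegral_of_nonneg_ae
      (Filter.Eventually.of_forall fun x => Real.rpow_nonneg (abs_nonneg _) t)
      ((huc.abs.rpow_const (fun x => Or.inr ht0.le)).aestronglyMeasurable)]
    have h3 : ∫⁻ x in B, ENNReal.ofReal (|u x|^t) = N^t := by
      rw [hNt, ← ENNReal.rpow_mul, one_div, inv_mul_cancel₀ (by positivity : t ≠ 0),
        ENNReal.rpow_one]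
      apply lintegral_congr
      intro x
      rw [ENNReal.ofReal_rpow_of_nonneg (abs_nonneg _) ht0.le]
    rw [h3, hN', ENNReal.toReal_rpow]
  have hvolB : (volume B).toReal = r^n * ω := by
    rw [hB, Measure.addHaar_ball volume x₀ hr.le, finrank_euclideanSpace_fin,
      ENNReal.toReal_mul, ENNReal.toReal_ofReal (by positivity), hω']
  have hvolB2 : (volume B2).toReal = (2*r)^n * ω := by
    rw [hB2, Measure.addHaar_ball volume x₀ (by linarith : (0:ℝ) ≤ 2*r),
      finrank_euclideanSpace_fin, ENNReal.toReal_mul,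
      ENNReal.toReal_ofReal (by positivity), hω']
  have hLHS : (⨍ x in B, |u x| ^ t ∂volume) ^ (1/t)
      = (((volume B).toReal)⁻¹)^(1/t) * N' := by
    rw [setAverage_eq, smul_eq_mul, hbase, Real.mul_rpow (by positivity)
      (Real.rpow_nonneg hN'0 t), ← Real.rpow_mul hN'0,
      mul_one_div_cancel (by positivity : t ≠ 0), Real.rpow_one]; rfl
  have hRHS : ⨍ x in B2, ‖fderiv ℝ u x‖ ∂volume = ((volume B2).toReal)⁻¹ * G' := by
    rw [setAverage_eq, smul_eq_mul]
    congr 1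
    rw [integral_eq_lintegral_of_nonneg_ae
      (Filter.Eventually.of_forall fun x => norm_nonneg _)
      (hgc.norm.aestronglyMeasurable), hG', hGl]
    congr 1
    apply lintegral_congr
    intro x
    rw [ofReal_norm_eq_coe_nnnorm]
  rw [hLHS, hRHS, h1t, ← ha]
  -- key volume identity
  have hiden : (((volume B).toReal)⁻¹)^(1/t)
      = 2^n * ω^(1/(n:ℝ)) * r * ((volume B2).toReal)⁻¹ := by
    rw [hvolB, hvolB2]
    exact rpow_ball_identity hn hr hω ht
  calc (((volume B).toReal)⁻¹)^(1/t) * N'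
      ≤ (((volume B).toReal)⁻¹)^(1/t) * ((Kc:ℝ) * S * G' / (1 - a)) :=
        mul_le_mul_of_nonneg_left habsorb (Real.rpow_nonneg (by positivity) _)
    _ = (2^n * ω^(1/(n:ℝ)) * r * ((volume B2).toReal)⁻¹) * ((Kc:ℝ) * S * G' / (1 - a)) := by
        rw [hiden]
    _ ≤ ((Kc:ℝ)+1) * S * (2^n * ω^(1/(n:ℝ))) / (1 - a) * r * (((volume B2).toReal)⁻¹ * G') := by
        have h1a : (0:ℝ) < 1 - a := by linarith
        have expand : 2^n * ω^(1/(n:ℝ)) * r * ((volume B2).toReal)⁻¹ *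
            ((Kc:ℝ) * S * G' / (1 - a))
            = ((Kc:ℝ) * (S * (2^n * ω^(1/(n:ℝ))))) *
              (r * (((volume B2).toReal)⁻¹ * G') / (1-a)) := by ring
        have expand2 : ((Kc:ℝ)+1) * S * (2^n * ω^(1/(n:ℝ))) / (1 - a) * r *
            (((volume B2).toReal)⁻¹ * G')
            = (((Kc:ℝ)+1) * (S * (2^n * ω^(1/(n:ℝ))))) *
              (r * (((volume B2).toReal)⁻¹ * G') / (1-a)) := by ring
        rw [expand, expand2]
        apply mul_le_mul_of_nonneg_right
        · apply mul_le_mul_of_nonneg_right (by linarith : (Kc:ℝ) ≤ (Kc:ℝ) + 1)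
          exact mul_nonneg hS.le (mul_nonneg (by positivity) (Real.rpow_nonneg hω.le _))
        · apply div_nonneg _ h1a.le
          apply mul_nonneg hr.le
          exact mul_nonneg (by positivity) hG'0
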